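/- arXiv:1805.02093 — 2 statements merged into one kernel-verified Lean document; each statement's English description precedes it below -/
import Mathlib

section
/- Let (P_n) be strongly invariant for the system (A). The pair (A,P) is polynomially dichotomic (i.e., (h,k)-dichotomic for the rates h_m = (m+1)^α, k_m = (m+1)^β for some α, β > 0) if and only if there exist a sequence of norms 𝒩 = {|||·|||_n : n ∈ ℕ} compatible with (P_n) and real constants α, β > 0 such that (m+1)^α|||A_m^n P_n x|||_m ≤ (n+1)^α|||P_n x|||_n and (m+1)^β|||B_m^n Q_m x|||_n ≤ (n+1)^β|||Q_m x|||_m for all m ≥ n and all x ∈ X. -/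
open ContinuousLinearMap Filter

noncomputable section

variable {X : Type*} [NormedAddCommGroup X] [NormedSpace ℝ X]

/-- The evolution operator `A_m^n` associated to the linear difference system
`x_{n+1} = A_n x_n`: `A_m^n = A_{m-1} ⋯ A_n` for `m > n` and `A_n^n = I`. -/
def evol (A : ℕ → X →L[ℝ] X) : ℕ → ℕ → X →L[ℝ] X
  | 0, _ => 1
  | m + 1, n => if m + 1 ≤ n then 1 else A m ∘L evol A m n

/-- `P` is a projectors sequence. -/
def ProjSeq (P : ℕ → X →L[ℝ] X) : Prop := ∀ n, P n ∘L P n = P n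

/-- The projectors sequence `P` is invariant for the system `(A)`. -/
def InvariantFor (A P : ℕ → X →L[ℝ] X) : Prop := ∀ n, A n ∘L P n = P (n + 1) ∘L A n

/-- The projectors sequence `P` is strongly invariant for the system `(A)`: it is invariant and
the restriction of `A_m^n` to `Ker P_n` is an isomorphism from `Ker P_n` onto `Ker P_m`. -/
def StronglyInvariantFor (A P : ℕ → X →L[ℝ] X) : Prop :=
  InvariantFor A P ∧ ∀ m n : ℕ, n ≤ m →
    Set.BijOn (evol A m n) (LinearMap.ker (P n : X →ₗ[ℝ] X) : Set X) (LinearMap.ker (P m : X →ₗ[ℝ] X) : Set X)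

/-- A growth rate: an increasing sequence with values in `[1, ∞)` tending to `∞`. -/
def IsGrowthRate (h : ℕ → ℝ) : Prop :=
  StrictMono h ∧ (∀ n, 1 ≤ h n) ∧ Tendsto h atTop atTop

/-- The pair `(A, P)` is `(h,k)`-dichotomic. -/
def Dichotomic (A P : ℕ → X →L[ℝ] X) (h k : ℕ → ℝ) : Prop :=
  ∃ d : ℕ → ℝ, (∀ n, 1 ≤ d n) ∧ Monotone d ∧
    ∀ m n : ℕ, n ≤ m → ∀ x : X,
      h m * ‖evol A m n (P n x)‖ ≤ d n * (h n * ‖P n x‖) ∧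
      k m * ‖(1 - P n) x‖ ≤ d m * (k n * ‖evol A m n ((1 - P n) x)‖)

/-- The pair `(A, P)` is uniformly `(h,k)`-dichotomic. -/
def UniformDichotomic (A P : ℕ → X →L[ℝ] X) (h k : ℕ → ℝ) : Prop :=
  ∃ d : ℝ, 1 ≤ d ∧
    ∀ m n : ℕ, n ≤ m → ∀ x : X,
      h m * ‖evol A m n (P n x)‖ ≤ d * (h n * ‖P n x‖) ∧
      k m * ‖(1 - P n) x‖ ≤ d * (k n * ‖evol A m n ((1 - P n) x)‖)

/-- The pair `(A, P)` has `(h,k)`-growth. -/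
def HasGrowth (A P : ℕ → X →L[ℝ] X) (h k : ℕ → ℝ) : Prop :=
  ∃ g : ℕ → ℝ, (∀ n, 1 ≤ g n) ∧ Monotone g ∧
    ∀ m n : ℕ, n ≤ m → ∀ x : X,
      h n * ‖evol A m n (P n x)‖ ≤ g n * (h m * ‖P n x‖) ∧
      k n * ‖(1 - P n) x‖ ≤ g m * (k m * ‖evol A m n ((1 - P n) x)‖)

/-- `N` is a sequence of norms on `X`. -/
def IsNormSeq (N : ℕ → X → ℝ) : Prop :=
  ∀ n, (∀ x y, N n (x + y) ≤ N n x + N n y) ∧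
    (∀ (a : ℝ) (x : X), N n (a • x) = |a| * N n x) ∧
    (∀ x, N n x = 0 ↔ x = 0)

/-- The sequence of norms `N` is compatible with the projectors sequence `P`. -/
def NormsCompatible (N : ℕ → X → ℝ) (P : ℕ → X →L[ℝ] X) : Prop :=
  IsNormSeq N ∧ ∃ c : ℕ → ℝ, (∀ n, 1 ≤ c n) ∧ Monotone c ∧
    ∀ (n : ℕ) (x : X), ‖x‖ ≤ N n x ∧ N n x ≤ c n * (‖P n x‖ + ‖(1 - P n) x‖)

/-- The defining properties of the skew-evolution operator `B` associated to the pair `(A, P)`: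
`A_m^n B_m^n Q_m = Q_m`, `B_m^n A_m^n Q_n = Q_n` and `B_m^n Q_m = Q_n B_m^n Q_m` for `m ≥ n`,
where `Q_n = I - P_n`. -/
def SkewEvol (A P : ℕ → X →L[ℝ] X) (B : ℕ → ℕ → X →L[ℝ] X) : Prop :=
  ∀ m n : ℕ, n ≤ m →
    evol A m n ∘L (B m n ∘L (1 - P m)) = 1 - P m ∧
    B m n ∘L (evol A m n ∘L (1 - P n)) = 1 - P n ∧
    B m n ∘L (1 - P m) = (1 - P n) ∘L (B m n ∘L (1 - P m))

lemma evol_of_le (A : ℕ → X →L[ℝ] X) {m n : ℕ} (h : m ≤ n) : evol A m n = 1 := by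
  cases m with
  | zero => rfl
  | succ m => rw [evol, if_pos h]

lemma evol_succ_of_le (A : ℕ → X →L[ℝ] X) {m n : ℕ} (h : n ≤ m) :
    evol A (m + 1) n = A m ∘L evol A m n := by
  rw [evol, if_neg (by omega)]

lemma evol_comp (A : ℕ → X →L[ℝ] X) {p n m : ℕ} (hpn : p ≤ n) (hnm : n ≤ m) (x : X) :
    evol A m p x = evol A m n (evol A n p x) := by
  induction m, hnm using Nat.le_induction with
  | base => rw [evol_of_le A le_rfl]; rfl
  | succ m hm ih =>
      rw [evol_succ_of_le A (hpn.trans hm), evol_succ_of_le A hm]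
      simp only [ContinuousLinearMap.comp_apply, ih]

lemma evol_P_comm {A P : ℕ → X →L[ℝ] X} (hinv : InvariantFor A P) {n m : ℕ} (hnm : n ≤ m)
    (x : X) : evol A m n (P n x) = P m (evol A m n x) := by
  induction m, hnm using Nat.le_induction with
  | base => rw [evol_of_le A le_rfl]; rfl
  | succ m hm ih =>
      rw [evol_succ_of_le A hm]
      have h2 := DFunLike.congr_fun (hinv m) (evol A m n x)
      simp only [ContinuousLinearMap.comp_apply] at h2 ⊢
      rw [ih, h2]

lemma evol_Q_comm {A P : ℕ → X →L[ℝ] X} (hinv : InvariantFor A P) {n m : ℕ} (hnm : n ≤ m)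
    (x : X) : evol A m n ((1 - P n) x) = (1 - P m) (evol A m n x) := by
  simp only [ContinuousLinearMap.sub_apply, ContinuousLinearMap.one_apply, map_sub,
    evol_P_comm hinv hnm]
/-- rate -/
def rt (α : ℝ) (n : ℕ) : ℝ := ((n : ℝ) + 1) ^ α

lemma rt_pos {α : ℝ} (n : ℕ) : 0 < rt α n := by
  unfold rt; positivity

lemma rt_mono {α : ℝ} (hα : 0 ≤ α) {i j : ℕ} (hij : i ≤ j) : rt α i ≤ rt α j := by
  unfold rt
  have : (i : ℝ) ≤ (j : ℝ) := Nat.cast_le.mpr hij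
  exact Real.rpow_le_rpow (by positivity) (by linarith) hα

/-- the first auxiliary family used to build the Lyapunov norms -/
def fwdG1 (A P : ℕ → X →L[ℝ] X) (α : ℝ) (n : ℕ) (x : X) (m : ℕ) : ℝ :=
  (rt α m / rt α n) * ‖evol A m n (P n x)‖

/-- the first part of the Lyapunov norm -/
def fwdN1 (A P : ℕ → X →L[ℝ] X) (α : ℝ) (n : ℕ) (x : X) : ℝ := ⨆ m, fwdG1 A P α n x m

/-- the second auxiliary family used to build the Lyapunov norms -/
def fwdG2 (B : ℕ → ℕ → X →L[ℝ] X) (P : ℕ → X →L[ℝ] X) (β : ℝ) (n : ℕ) (x : X) (p : ℕ) : ℝ :=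
  (rt β n / rt β p) * ‖B n p ((1 - P n) x)‖

/-- the second part of the Lyapunov norm -/
def fwdN2 (B : ℕ → ℕ → X →L[ℝ] X) (P : ℕ → X →L[ℝ] X) (β : ℝ) (n : ℕ) (x : X) : ℝ :=
  (Finset.range (n + 1)).sup' Finset.nonempty_range_add_one (fwdG2 B P β n x)
lemma fwd_main [CompleteSpace X] (A P : ℕ → X →L[ℝ] X) (B : ℕ → ℕ → X →L[ℝ] X)
    (hP : ProjSeq P) (hinv : InvariantFor A P)
    (hbij : ∀ m n : ℕ, n ≤ m →
      Set.BijOn (evol A m n) (LinearMap.ker (P n : X →ₗ[ℝ] X) : Set X) (LinearMap.ker (P m : X →ₗ[ℝ] X) : Set X))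
    (hB : SkewEvol A P B) (α β : ℝ) (hα : 0 < α) (hβ : 0 < β) (d : ℕ → ℝ)
    (hd1 : ∀ n, 1 ≤ d n) (hdm : Monotone d)
    (hdich : ∀ m n : ℕ, n ≤ m → ∀ x : X,
      rt α m * ‖evol A m n (P n x)‖ ≤ d n * (rt α n * ‖P n x‖) ∧
      rt β m * ‖(1 - P n) x‖ ≤ d m * (rt β n * ‖evol A m n ((1 - P n) x)‖)) :
    ∃ N : ℕ → X → ℝ, NormsCompatible N P ∧ ∃ α β : ℝ, 0 < α ∧ 0 < β ∧
      ∀ m n : ℕ, n ≤ m → ∀ x : X,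
        ((m : ℝ) + 1) ^ α * N m (evol A m n (P n x)) ≤
          ((n : ℝ) + 1) ^ α * N n (P n x) ∧
        ((m : ℝ) + 1) ^ β * N n (B m n ((1 - P m) x)) ≤
          ((n : ℝ) + 1) ^ β * N m ((1 - P m) x) := by
  -- basic projector identities
  have hPP : ∀ n (x : X), P n (P n x) = P n x := fun n x => by
    have := DFunLike.congr_fun (hP n) x
    simpa using this
  have hQP : ∀ n (x : X), (1 - P n) (P n x) = 0 := fun n x => by
    simp [ContinuousLinearMap.sub_apply, hPP n x]
  have hPQ : ∀ n (x : X), P n ((1 - P n) x) = 0 := fun n x => by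
    simp [ContinuousLinearMap.sub_apply, map_sub, hPP n x]
  have hQQ : ∀ n (x : X), (1 - P n) ((1 - P n) x) = (1 - P n) x := fun n x => by
    simp [ContinuousLinearMap.sub_apply, map_sub, hPP n x]
  have hd0 : ∀ n, (0 : ℝ) < d n := fun n => lt_of_lt_of_le one_pos (hd1 n)
  -- bounds on the first family
  have g1_nonneg : ∀ n (x : X) m, 0 ≤ fwdG1 A P α n x m := fun n x m =>
    mul_nonneg (div_nonneg (rt_pos m).le (rt_pos n).le) (norm_nonneg _)
  have g1_bdd : ∀ n (x : X) m, fwdG1 A P α n x m ≤ d n * ‖P n x‖ := by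
    intro n x m
    unfold fwdG1
    rcases le_or_gt n m with hnm | hmn
    · have hdi := (hdich m n hnm x).1
      rw [div_mul_eq_mul_div, div_le_iff₀ (rt_pos n)]
      calc rt α m * ‖evol A m n (P n x)‖ ≤ d n * (rt α n * ‖P n x‖) := hdi
        _ = d n * ‖P n x‖ * rt α n := by ring
    · rw [evol_of_le A hmn.le]
      have h1 : rt α m / rt α n ≤ 1 := div_le_one_of_le₀ (rt_mono hα.le hmn.le) (rt_pos n).le
      calc (rt α m / rt α n) * ‖(1 : X →L[ℝ] X) (P n x)‖ ≤ 1 * ‖P n x‖ := by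
            simp only [ContinuousLinearMap.one_apply]
            exact mul_le_mul_of_nonneg_right h1 (norm_nonneg _)
        _ ≤ d n * ‖P n x‖ := mul_le_mul_of_nonneg_right (hd1 n) (norm_nonneg _)
  have bdd1 : ∀ n (x : X), BddAbove (Set.range (fwdG1 A P α n x)) := fun n x =>
    ⟨d n * ‖P n x‖, by rintro v ⟨m, rfl⟩; exact g1_bdd n x m⟩
  have le_N1 : ∀ n (x : X) m, fwdG1 A P α n x m ≤ fwdN1 A P α n x := fun n x m =>
    le_ciSup (bdd1 n x) m
  have N1_le : ∀ n (x : X), fwdN1 A P α n x ≤ d n * ‖P n x‖ := fun n x =>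
    ciSup_le (g1_bdd n x)
  have g1_self : ∀ n (x : X), fwdG1 A P α n x n = ‖P n x‖ := by
    intro n x
    unfold fwdG1
    rw [div_self (rt_pos n).ne', evol_of_le A le_rfl, one_mul]
    simp
  have N1_nonneg : ∀ n (x : X), 0 ≤ fwdN1 A P α n x := fun n x =>
    le_trans (g1_nonneg n x 0) (le_N1 n x 0)
  have P_le_N1 : ∀ n (x : X), ‖P n x‖ ≤ fwdN1 A P α n x := fun n x =>
    g1_self n x ▸ le_N1 n x n
  -- bounds on the second family
  have g2_nonneg : ∀ n (x : X) p, 0 ≤ fwdG2 B P β n x p := fun n x p =>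
    mul_nonneg (div_nonneg (rt_pos n).le (rt_pos p).le) (norm_nonneg _)
  have g2_bdd : ∀ n (x : X), ∀ p ≤ n, fwdG2 B P β n x p ≤ d n * ‖(1 - P n) x‖ := by
    intro n x p hpn
    unfold fwdG2
    have hz3 := DFunLike.congr_fun (hB n p hpn).2.2 x
    simp only [ContinuousLinearMap.comp_apply] at hz3
    have h1 := DFunLike.congr_fun (hB n p hpn).1 x
    simp only [ContinuousLinearMap.comp_apply] at h1
    have hdi := (hdich n p hpn (B n p ((1 - P n) x))).2
    rw [← hz3, h1] at hdi
    rw [div_mul_eq_mul_div, div_le_iff₀ (rt_pos p)]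
    calc rt β n * ‖B n p ((1 - P n) x)‖ ≤ d n * (rt β p * ‖(1 - P n) x‖) := hdi
      _ = d n * ‖(1 - P n) x‖ * rt β p := by ring
  have N2_le : ∀ n (x : X), fwdN2 B P β n x ≤ d n * ‖(1 - P n) x‖ := fun n x =>
    Finset.sup'_le _ _ fun p hp => g2_bdd n x p (Finset.mem_range_succ_iff.mp hp)
  have le_N2 : ∀ n (x : X), ∀ p ≤ n, fwdG2 B P β n x p ≤ fwdN2 B P β n x := fun n x p hp =>
    Finset.le_sup' (fwdG2 B P β n x) (Finset.mem_range_succ_iff.mpr hp)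
  have g2_self : ∀ n (x : X), fwdG2 B P β n x n = ‖(1 - P n) x‖ := by
    intro n x
    have h1 := DFunLike.congr_fun (hB n n le_rfl).1 x
    rw [evol_of_le A le_rfl] at h1
    simp only [ContinuousLinearMap.comp_apply, ContinuousLinearMap.one_apply] at h1
    unfold fwdG2
    rw [div_self (rt_pos n).ne', one_mul, h1]
  have Q_le_N2 : ∀ n (x : X), ‖(1 - P n) x‖ ≤ fwdN2 B P β n x := fun n x =>
    g2_self n x ▸ le_N2 n x n le_rfl
  have N2_nonneg : ∀ n (x : X), 0 ≤ fwdN2 B P β n x := fun n x =>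
    le_trans (norm_nonneg _) (Q_le_N2 n x)
  -- the candidate norms
  refine ⟨fun n x => fwdN1 A P α n x + fwdN2 B P β n x, ⟨?_, d, hd1, hdm, ?_⟩,
    α, β, hα, hβ, ?_⟩
  · -- IsNormSeq
    intro n
    refine ⟨fun x y => ?_, fun a x => ?_, fun x => ?_⟩
    · -- triangle inequality
      have t1 : fwdN1 A P α n (x + y) ≤ fwdN1 A P α n x + fwdN1 A P α n y := by
        apply ciSup_le
        intro m
        have hle : fwdG1 A P α n (x + y) m ≤ fwdG1 A P α n x m + fwdG1 A P α n y m := by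
          unfold fwdG1
          rw [← mul_add]
          refine mul_le_mul_of_nonneg_left ?_ (div_nonneg (rt_pos m).le (rt_pos n).le)
          rw [map_add, map_add]
          exact norm_add_le _ _
        exact hle.trans (add_le_add (le_N1 n x m) (le_N1 n y m))
      have t2 : fwdN2 B P β n (x + y) ≤ fwdN2 B P β n x + fwdN2 B P β n y := by
        apply Finset.sup'_le
        intro p hp
        have hpn := Finset.mem_range_succ_iff.mp hp
        have hle : fwdG2 B P β n (x + y) p ≤ fwdG2 B P β n x p + fwdG2 B P β n y p := by
          unfold fwdG2
          rw [← mul_add]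
          refine mul_le_mul_of_nonneg_left ?_ (div_nonneg (rt_pos n).le (rt_pos p).le)
          rw [map_add, map_add]
          exact norm_add_le _ _
        exact hle.trans (add_le_add (le_N2 n x p hpn) (le_N2 n y p hpn))
      show fwdN1 A P α n (x + y) + fwdN2 B P β n (x + y) ≤
        fwdN1 A P α n x + fwdN2 B P β n x + (fwdN1 A P α n y + fwdN2 B P β n y)
      linarith
    · -- homogeneity
      have e1 : ∀ m, fwdG1 A P α n (a • x) m = |a| * fwdG1 A P α n x m := by
        intro m
        unfold fwdG1
        rw [map_smul, map_smul, norm_smul, Real.norm_eq_abs]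
        ring
      have e2 : ∀ p, fwdG2 B P β n (a • x) p = |a| * fwdG2 B P β n x p := by
        intro p
        unfold fwdG2
        rw [map_smul, map_smul, norm_smul, Real.norm_eq_abs]
        ring
      have hs1 : fwdN1 A P α n (a • x) = |a| * fwdN1 A P α n x := by
        unfold fwdN1
        simp only [e1]
        rw [← Real.mul_iSup_of_nonneg (abs_nonneg a)]
      have hs2 : fwdN2 B P β n (a • x) = |a| * fwdN2 B P β n x := by
        have hc := Finset.comp_sup'_eq_sup'_comp (s := Finset.range (n + 1))
          Finset.nonempty_range_add_one (f := fwdG2 B P β n x) (fun t => |a| * t)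
          (fun u v => by exact mul_max_of_nonneg u v (abs_nonneg a))
        unfold fwdN2
        simp only [e2]
        simp only [Function.comp_def] at hc
        exact hc.symm
      show fwdN1 A P α n (a • x) + fwdN2 B P β n (a • x) =
        |a| * (fwdN1 A P α n x + fwdN2 B P β n x)
      rw [hs1, hs2, mul_add]
    · -- definiteness
      show fwdN1 A P α n x + fwdN2 B P β n x = 0 ↔ x = 0
      constructor
      · intro h0
        have h1 := P_le_N1 n x
        have h2 := Q_le_N2 n x
        have h3 : ‖P n x‖ ≤ 0 := by
          have := norm_nonneg ((1 - P n) x)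
          linarith
        have h4 : ‖(1 - P n) x‖ ≤ 0 := by
          have := norm_nonneg (P n x)
          linarith
        have e1 : P n x = 0 := norm_eq_zero.mp (le_antisymm h3 (norm_nonneg _))
        have e2 : (1 - P n) x = 0 := norm_eq_zero.mp (le_antisymm h4 (norm_nonneg _))
        have e3 : x - P n x = 0 := by
          simpa [ContinuousLinearMap.sub_apply] using e2
        rw [e1, sub_zero] at e3
        exact e3
      · rintro rfl
        have z1 : fwdN1 A P α n 0 = 0 := by
          unfold fwdN1 fwdG1
          simp
        have z2 : fwdN2 B P β n 0 = 0 := by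
          unfold fwdN2 fwdG2
          simp
        rw [z1, z2, add_zero]
  · -- compatibility
    intro n x
    refine ⟨?_, ?_⟩
    · show ‖x‖ ≤ fwdN1 A P α n x + fwdN2 B P β n x
      have hx : ‖x‖ ≤ ‖P n x‖ + ‖(1 - P n) x‖ := by
        calc ‖x‖ = ‖P n x + (1 - P n) x‖ := by
              congr 1
              simp [ContinuousLinearMap.sub_apply]
          _ ≤ _ := norm_add_le _ _
      have := P_le_N1 n x
      have := Q_le_N2 n x
      linarith
    · show fwdN1 A P α n x + fwdN2 B P β n x ≤ d n * (‖P n x‖ + ‖(1 - P n) x‖)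
      have := N1_le n x
      have := N2_le n x
      calc fwdN1 A P α n x + fwdN2 B P β n x
          ≤ d n * ‖P n x‖ + d n * ‖(1 - P n) x‖ := by linarith
        _ = d n * (‖P n x‖ + ‖(1 - P n) x‖) := by ring
  · -- the two main inequalities
    intro m n hnm x
    constructor
    · -- first inequality
      have hPx' : P m (evol A m n (P n x)) = evol A m n (P n x) := by
        rw [evol_P_comm hinv hnm x]
        exact hPP m _
      have hQx' : (1 - P m) (evol A m n (P n x)) = 0 := by
        have hq := evol_Q_comm hinv hnm (P n x)
        rw [hQP n x] at hq
        simpa using hq.symm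
      have hN2z : fwdN2 B P β m (evol A m n (P n x)) = 0 := by
        refine le_antisymm (Finset.sup'_le _ _ fun p hp => ?_) (N2_nonneg m _)
        unfold fwdG2
        rw [hQx']
        simp
      have key : fwdN1 A P α m (evol A m n (P n x))
          ≤ (rt α n / rt α m) * fwdN1 A P α n (P n x) := by
        apply ciSup_le
        intro j
        rcases le_or_gt m j with hmj | hjm
        · have ee : fwdG1 A P α m (evol A m n (P n x)) j
              = (rt α n / rt α m) * fwdG1 A P α n (P n x) j := by
            unfold fwdG1
            rw [hPx', ← evol_comp A hnm hmj (P n x), hPP n x]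
            have hc : rt α j / rt α m = (rt α n / rt α m) * (rt α j / rt α n) := by
              have hm0 : rt α m ≠ 0 := (rt_pos m).ne'
              have hn0 : rt α n ≠ 0 := (rt_pos n).ne'
              field_simp
            rw [hc]
            ring
          rw [ee]
          exact mul_le_mul_of_nonneg_left (le_N1 n (P n x) j)
            (div_nonneg (rt_pos n).le (rt_pos m).le)
        · have ee : fwdG1 A P α m (evol A m n (P n x)) j
              = (rt α j / rt α m) * ‖evol A m n (P n x)‖ := by
            unfold fwdG1
            rw [hPx', evol_of_le A hjm.le]
            simp
          have e2 : (rt α n / rt α m) * fwdG1 A P α n (P n x) m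
              = ‖evol A m n (P n x)‖ := by
            unfold fwdG1
            rw [hPP n x]
            have hm0 : rt α m ≠ 0 := (rt_pos m).ne'
            have hn0 : rt α n ≠ 0 := (rt_pos n).ne'
            field_simp
          calc fwdG1 A P α m (evol A m n (P n x)) j
              ≤ ‖evol A m n (P n x)‖ := by
                rw [ee]
                have h1 : rt α j / rt α m ≤ 1 :=
                  div_le_one_of_le₀ (rt_mono hα.le hjm.le) (rt_pos m).le
                calc (rt α j / rt α m) * ‖evol A m n (P n x)‖
                    ≤ 1 * ‖evol A m n (P n x)‖ :=
                      mul_le_mul_of_nonneg_right h1 (norm_nonneg _)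
                  _ = _ := one_mul _
            _ = (rt α n / rt α m) * fwdG1 A P α n (P n x) m := e2.symm
            _ ≤ (rt α n / rt α m) * fwdN1 A P α n (P n x) :=
                mul_le_mul_of_nonneg_left (le_N1 n (P n x) m)
                  (div_nonneg (rt_pos n).le (rt_pos m).le)
      show rt α m * (fwdN1 A P α m (evol A m n (P n x)) + fwdN2 B P β m (evol A m n (P n x)))
          ≤ rt α n * (fwdN1 A P α n (P n x) + fwdN2 B P β n (P n x))
      rw [hN2z, add_zero]
      calc rt α m * fwdN1 A P α m (evol A m n (P n x))
          ≤ rt α m * ((rt α n / rt α m) * fwdN1 A P α n (P n x)) :=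
            mul_le_mul_of_nonneg_left key (rt_pos m).le
        _ = rt α n * fwdN1 A P α n (P n x) := by
            have hm0 : rt α m ≠ 0 := (rt_pos m).ne'
            field_simp
        _ ≤ rt α n * (fwdN1 A P α n (P n x) + fwdN2 B P β n (P n x)) :=
            mul_le_mul_of_nonneg_left (le_add_of_nonneg_right (N2_nonneg n _)) (rt_pos n).le
    · -- second inequality
      have h3 := DFunLike.congr_fun (hB m n hnm).2.2 x
      simp only [ContinuousLinearMap.comp_apply] at h3
      -- h3 : B m n ((1 - P m) x) = (1 - P n) (B m n ((1 - P m) x))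
      have hPny : P n (B m n ((1 - P m) x)) = 0 := by
        calc P n (B m n ((1 - P m) x)) = P n ((1 - P n) (B m n ((1 - P m) x))) := by
              rw [← h3]
          _ = 0 := hPQ n _
      have hN1y : fwdN1 A P α n (B m n ((1 - P m) x)) = 0 := by
        refine le_antisymm (ciSup_le fun j => ?_) (N1_nonneg n _)
        unfold fwdG1
        rw [hPny]
        simp
      have h1y := DFunLike.congr_fun (hB m n hnm).1 x
      simp only [ContinuousLinearMap.comp_apply] at h1y
      -- h1y : evol A m n (B m n ((1 - P m) x)) = (1 - P m) x
      have hBc : ∀ p, p ≤ n →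
          B n p ((1 - P n) (B m n ((1 - P m) x))) = B m p ((1 - P m) x) := by
        intro p hpn
        have hpm : p ≤ m := hpn.trans hnm
        have hu3 := DFunLike.congr_fun (hB n p hpn).2.2 (B m n ((1 - P m) x))
        simp only [ContinuousLinearMap.comp_apply] at hu3
        have hv3 := DFunLike.congr_fun (hB m p hpm).2.2 x
        simp only [ContinuousLinearMap.comp_apply] at hv3
        have hPpu : P p (B n p ((1 - P n) (B m n ((1 - P m) x)))) = 0 := by
          rw [hu3]; exact hPQ p _
        have hPpv : P p (B m p ((1 - P m) x)) = 0 := by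
          rw [hv3]; exact hPQ p _
        have h1u := DFunLike.congr_fun (hB n p hpn).1 (B m n ((1 - P m) x))
        simp only [ContinuousLinearMap.comp_apply] at h1u
        have h1v := DFunLike.congr_fun (hB m p hpm).1 x
        simp only [ContinuousLinearMap.comp_apply] at h1v
        have himg : evol A m p (B n p ((1 - P n) (B m n ((1 - P m) x)))) = (1 - P m) x := by
          rw [evol_comp A hpn hnm, h1u, ← h3, h1y]
        have hmu : B n p ((1 - P n) (B m n ((1 - P m) x))) ∈ (LinearMap.ker (P p : X →ₗ[ℝ] X) : Set X) := by
          rw [SetLike.mem_coe, LinearMap.mem_ker]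
          exact hPpu
        have hmv : B m p ((1 - P m) x) ∈ (LinearMap.ker (P p : X →ₗ[ℝ] X) : Set X) := by
          rw [SetLike.mem_coe, LinearMap.mem_ker]
          exact hPpv
        exact (hbij m p hpm).injOn hmu hmv (himg.trans h1v.symm)
      show rt β m * (fwdN1 A P α n (B m n ((1 - P m) x)) + fwdN2 B P β n (B m n ((1 - P m) x)))
          ≤ rt β n * (fwdN1 A P α m ((1 - P m) x) + fwdN2 B P β m ((1 - P m) x))
      rw [hN1y, zero_add]
      have hs : rt β m * fwdN2 B P β n (B m n ((1 - P m) x))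
          ≤ rt β n * fwdN2 B P β m ((1 - P m) x) := by
        have hc := Finset.comp_sup'_eq_sup'_comp (s := Finset.range (n + 1))
          Finset.nonempty_range_add_one (f := fwdG2 B P β n (B m n ((1 - P m) x)))
          (fun t => rt β m * t)
          (fun u v => by exact mul_max_of_nonneg u v (rt_pos m).le)
        rw [show rt β m * fwdN2 B P β n (B m n ((1 - P m) x))
            = (Finset.range (n + 1)).sup' Finset.nonempty_range_add_one
              ((fun t => rt β m * t) ∘ fwdG2 B P β n (B m n ((1 - P m) x))) from hc]
        apply Finset.sup'_le
        intro p hp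
        have hpn := Finset.mem_range_succ_iff.mp hp
        have hterm : ((fun t => rt β m * t) ∘ fwdG2 B P β n (B m n ((1 - P m) x))) p
            = rt β n * fwdG2 B P β m ((1 - P m) x) p := by
          simp only [Function.comp]
          unfold fwdG2
          rw [hBc p hpn, hQQ m x]
          ring
        rw [hterm]
        exact mul_le_mul_of_nonneg_left (le_N2 m ((1 - P m) x) p (hpn.trans hnm)) (rt_pos n).le
      calc rt β m * fwdN2 B P β n (B m n ((1 - P m) x))
          ≤ rt β n * fwdN2 B P β m ((1 - P m) x) := hs
        _ ≤ rt β n * (fwdN1 A P α m ((1 - P m) x) + fwdN2 B P β m ((1 - P m) x)) :=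
            mul_le_mul_of_nonneg_left (le_add_of_nonneg_left (N1_nonneg m _)) (rt_pos n).le
theorem stmt_8 [CompleteSpace X] (A P : ℕ → X →L[ℝ] X) (B : ℕ → ℕ → X →L[ℝ] X)
    (hP : ProjSeq P) (hSI : StronglyInvariantFor A P) (hB : SkewEvol A P B) :
    (∃ α β : ℝ, 0 < α ∧ 0 < β ∧
      Dichotomic A P (fun m => ((m : ℝ) + 1) ^ α) (fun m => ((m : ℝ) + 1) ^ β)) ↔
      ∃ N : ℕ → X → ℝ, NormsCompatible N P ∧ ∃ α β : ℝ, 0 < α ∧ 0 < β ∧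
        ∀ m n : ℕ, n ≤ m → ∀ x : X,
          ((m : ℝ) + 1) ^ α * N m (evol A m n (P n x)) ≤
            ((n : ℝ) + 1) ^ α * N n (P n x) ∧
          ((m : ℝ) + 1) ^ β * N n (B m n ((1 - P m) x)) ≤
            ((n : ℝ) + 1) ^ β * N m ((1 - P m) x) := by
  have hPP : ∀ n (x : X), P n (P n x) = P n x := fun n x => by
    have := DFunLike.congr_fun (hP n) x
    simpa using this
  have hQP : ∀ n (x : X), (1 - P n) (P n x) = 0 := fun n x => by
    simp [ContinuousLinearMap.sub_apply, hPP n x]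
  have hPQ : ∀ n (x : X), P n ((1 - P n) x) = 0 := fun n x => by
    simp [ContinuousLinearMap.sub_apply, map_sub, hPP n x]
  have hQQ : ∀ n (x : X), (1 - P n) ((1 - P n) x) = (1 - P n) x := fun n x => by
    simp [ContinuousLinearMap.sub_apply, map_sub, hPP n x]
  constructor
  · rintro ⟨α, β, hα, hβ, d, hd1, hdm, hdich⟩
    exact fwd_main A P B hP hSI.1 hSI.2 hB α β hα hβ d hd1 hdm hdich
  · rintro ⟨N, ⟨hNseq, c, hc1, hcm, hcomp⟩, α, β, hα, hβ, hkey⟩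
    refine ⟨α, β, hα, hβ, c, hc1, hcm, fun m n hnm x => ?_⟩
    have hma : (0 : ℝ) < ((m : ℝ) + 1) ^ α := by positivity
    have hna : (0 : ℝ) < ((n : ℝ) + 1) ^ α := by positivity
    have hmb : (0 : ℝ) < ((m : ℝ) + 1) ^ β := by positivity
    have hnb : (0 : ℝ) < ((n : ℝ) + 1) ^ β := by positivity
    constructor
    · calc ((m : ℝ) + 1) ^ α * ‖evol A m n (P n x)‖
          ≤ ((m : ℝ) + 1) ^ α * N m (evol A m n (P n x)) :=
            mul_le_mul_of_nonneg_left (hcomp m (evol A m n (P n x))).1 hma.le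
        _ ≤ ((n : ℝ) + 1) ^ α * N n (P n x) := (hkey m n hnm x).1
        _ ≤ ((n : ℝ) + 1) ^ α * (c n * (‖P n (P n x)‖ + ‖(1 - P n) (P n x)‖)) :=
            mul_le_mul_of_nonneg_left (hcomp n (P n x)).2 hna.le
        _ = c n * (((n : ℝ) + 1) ^ α * ‖P n x‖) := by
            rw [hPP n x, hQP n x]
            simp only [norm_zero, add_zero]
            ring
    · have hyz : evol A m n ((1 - P n) x) = (1 - P m) (evol A m n x) :=
        evol_Q_comm hSI.1 hnm x
      have hBy : B m n ((1 - P m) (evol A m n x)) = (1 - P n) x := by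
        have h2 := DFunLike.congr_fun (hB m n hnm).2.1 x
        simp only [ContinuousLinearMap.comp_apply] at h2
        rw [← hyz]
        exact h2
      have key := (hkey m n hnm (evol A m n x)).2
      rw [hBy] at key
      calc ((m : ℝ) + 1) ^ β * ‖(1 - P n) x‖
          ≤ ((m : ℝ) + 1) ^ β * N n ((1 - P n) x) :=
            mul_le_mul_of_nonneg_left (hcomp n ((1 - P n) x)).1 hmb.le
        _ ≤ ((n : ℝ) + 1) ^ β * N m ((1 - P m) (evol A m n x)) := key
        _ ≤ ((n : ℝ) + 1) ^ β * (c m * (‖P m ((1 - P m) (evol A m n x))‖ +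
              ‖(1 - P m) ((1 - P m) (evol A m n x))‖)) :=
            mul_le_mul_of_nonneg_left (hcomp m _).2 hnb.le
        _ = c m * (((n : ℝ) + 1) ^ β * ‖evol A m n ((1 - P n) x)‖) := by
            rw [hPQ m (evol A m n x), hQQ m (evol A m n x), ← hyz]
            simp only [norm_zero, zero_add]
            ring

end
end

section
/- If the pair (A,P) has (h,k)-growth with (P_n) strongly invariant for the system (A), then the sequence of norms defined by ‖x‖_n = sup_{m ≥ n} (h_n/h_m)‖A_m^n P_n x‖ + sup_{p ≤ n} (k_p/k_n)‖B_n^p Q_n x‖, for all n ∈ ℕ and x ∈ X, is a well-defined sequence of norms compatible with (P_n). -/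
open ContinuousLinearMap Filter

noncomputable section

variable {X : Type*} [NormedAddCommGroup X] [NormedSpace ℝ X]

lemma evol_self' (A : ℕ → X →L[ℝ] X) (n : ℕ) : evol A n n = 1 := by
  cases n with
  | zero => rfl
  | succ m => simp [evol]

lemma csSup_mul_left' {a : ℝ} (ha : 0 ≤ a) {S : Set ℝ} (hne : S.Nonempty)
    (hbdd : BddAbove S) : sSup ((fun t => a * t) '' S) = a * sSup S := by
  rcases eq_or_lt_of_le ha with rfl | ha'
  · have h1 : (fun t => (0:ℝ) * t) '' S = (fun _ => (0:ℝ)) '' S := by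
      simp
    rw [h1, hne.image_const, csSup_singleton, zero_mul]
  · apply le_antisymm
    · refine csSup_le (hne.image _) ?_
      rintro _ ⟨t, ht, rfl⟩
      exact mul_le_mul_of_nonneg_left (le_csSup hbdd ht) ha
    · rw [mul_comm, ← le_div_iff₀ ha']
      refine csSup_le hne fun t ht => ?_
      rw [le_div_iff₀ ha', mul_comm]
      obtain ⟨M, hM⟩ := hbdd
      refine le_csSup ⟨a * M, ?_⟩ ⟨t, ht, rfl⟩
      rintro _ ⟨s, hs, rfl⟩
      exact mul_le_mul_of_nonneg_left (hM hs) ha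

theorem stmt_12 [CompleteSpace X] (A P : ℕ → X →L[ℝ] X) (B : ℕ → ℕ → X →L[ℝ] X)
    (hP : ProjSeq P) (hSI : StronglyInvariantFor A P) (hB : SkewEvol A P B)
    (h k : ℕ → ℝ) (hh : IsGrowthRate h) (hk : IsGrowthRate k)
    (hG : HasGrowth A P h k) :
    NormsCompatible (fun n x =>
      sSup ((fun m => (h n / h m) * ‖evol A m n (P n x)‖) '' Set.Ici n) +
      sSup ((fun p => (k p / k n) * ‖B n p ((1 - P n) x)‖) '' Set.Iic n)) P := by
  obtain ⟨g, hg1, hgmono, hgrow⟩ := hG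
  obtain ⟨-, hh1, -⟩ := hh
  obtain ⟨-, hk1, -⟩ := hk
  have hhpos : ∀ n, (0:ℝ) < h n := fun n => zero_lt_one.trans_le (hh1 n)
  have hkpos : ∀ n, (0:ℝ) < k n := fun n => zero_lt_one.trans_le (hk1 n)
  have hBnn : ∀ (n : ℕ) (x : X), B n n ((1 - P n) x) = (1 - P n) x := by
    intro n x
    have h1 := (hB n n le_rfl).1
    rw [evol_self', one_def, id_comp] at h1
    simpa using DFunLike.congr_fun h1 x
  have hb1 : ∀ (n : ℕ) (x : X), ∀ m ∈ Set.Ici n,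
      (h n / h m) * ‖evol A m n (P n x)‖ ≤ g n * ‖P n x‖ := by
    intro n x m hm
    have H := (hgrow m n hm x).1
    rw [div_mul_eq_mul_div, div_le_iff₀ (hhpos m)]
    calc h n * ‖evol A m n (P n x)‖ ≤ g n * (h m * ‖P n x‖) := H
      _ = g n * ‖P n x‖ * h m := by ring
  have hb2 : ∀ (n : ℕ) (x : X), ∀ p ∈ Set.Iic n,
      (k p / k n) * ‖B n p ((1 - P n) x)‖ ≤ g n * ‖(1 - P n) x‖ := by
    intro n x p hp
    obtain ⟨hB1, hB2, hB3⟩ := hB n p hp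
    have hy1 : (1 - P p) (B n p ((1 - P n) x)) = B n p ((1 - P n) x) := by
      have := DFunLike.congr_fun hB3 x
      simp only [ContinuousLinearMap.comp_apply] at this
      exact this.symm
    have hy2 : evol A n p (B n p ((1 - P n) x)) = (1 - P n) x := by
      have := DFunLike.congr_fun hB1 x
      simpa using this
    have H := (hgrow n p hp (B n p ((1 - P n) x))).2
    rw [hy1, hy2] at H
    rw [div_mul_eq_mul_div, div_le_iff₀ (hkpos n)]
    calc k p * ‖B n p ((1 - P n) x)‖ ≤ g n * (k n * ‖(1 - P n) x‖) := H
      _ = g n * ‖(1 - P n) x‖ * k n := by ring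
  have hbdd1 : ∀ (n : ℕ) (x : X),
      BddAbove ((fun m => (h n / h m) * ‖evol A m n (P n x)‖) '' Set.Ici n) := by
    intro n x
    refine ⟨g n * ‖P n x‖, ?_⟩
    rintro _ ⟨m, hm, rfl⟩
    exact hb1 n x m hm
  have hbdd2 : ∀ (n : ℕ) (x : X),
      BddAbove ((fun p => (k p / k n) * ‖B n p ((1 - P n) x)‖) '' Set.Iic n) := by
    intro n x
    refine ⟨g n * ‖(1 - P n) x‖, ?_⟩
    rintro _ ⟨p, hp, rfl⟩
    exact hb2 n x p hp
  have hne1 : ∀ (n : ℕ) (x : X),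
      ((fun m => (h n / h m) * ‖evol A m n (P n x)‖) '' Set.Ici n).Nonempty :=
    fun n x => ⟨_, ⟨n, Set.self_mem_Ici, rfl⟩⟩
  have hne2 : ∀ (n : ℕ) (x : X),
      ((fun p => (k p / k n) * ‖B n p ((1 - P n) x)‖) '' Set.Iic n).Nonempty :=
    fun n x => ⟨_, ⟨n, Set.self_mem_Iic, rfl⟩⟩
  have hmem1 : ∀ (n : ℕ) (x : X),
      ‖P n x‖ ∈ ((fun m => (h n / h m) * ‖evol A m n (P n x)‖) '' Set.Ici n) := by
    intro n x
    refine ⟨n, Set.self_mem_Ici, ?_⟩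
    show h n / h n * ‖evol A n n (P n x)‖ = ‖P n x‖
    rw [evol_self', div_self (hhpos n).ne', one_mul, ContinuousLinearMap.one_apply]
  have hmem2 : ∀ (n : ℕ) (x : X),
      ‖(1 - P n) x‖ ∈ ((fun p => (k p / k n) * ‖B n p ((1 - P n) x)‖) '' Set.Iic n) := by
    intro n x
    refine ⟨n, Set.self_mem_Iic, ?_⟩
    show k n / k n * ‖B n n ((1 - P n) x)‖ = ‖(1 - P n) x‖
    rw [hBnn, div_self (hkpos n).ne', one_mul]
  have hlow1 : ∀ (n : ℕ) (x : X),
      ‖P n x‖ ≤ sSup ((fun m => (h n / h m) * ‖evol A m n (P n x)‖) '' Set.Ici n) :=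
    fun n x => le_csSup (hbdd1 n x) (hmem1 n x)
  have hlow2 : ∀ (n : ℕ) (x : X),
      ‖(1 - P n) x‖ ≤ sSup ((fun p => (k p / k n) * ‖B n p ((1 - P n) x)‖) '' Set.Iic n) :=
    fun n x => le_csSup (hbdd2 n x) (hmem2 n x)
  have hup1 : ∀ (n : ℕ) (x : X),
      sSup ((fun m => (h n / h m) * ‖evol A m n (P n x)‖) '' Set.Ici n) ≤ g n * ‖P n x‖ := by
    intro n x
    refine csSup_le (hne1 n x) ?_
    rintro _ ⟨m, hm, rfl⟩
    exact hb1 n x m hm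
  have hup2 : ∀ (n : ℕ) (x : X),
      sSup ((fun p => (k p / k n) * ‖B n p ((1 - P n) x)‖) '' Set.Iic n) ≤
        g n * ‖(1 - P n) x‖ := by
    intro n x
    refine csSup_le (hne2 n x) ?_
    rintro _ ⟨p, hp, rfl⟩
    exact hb2 n x p hp
  have hPQ : ∀ (n : ℕ) (x : X), P n x + (1 - P n) x = x := by
    intro n x
    simp
  have hxle : ∀ (n : ℕ) (x : X), ‖x‖ ≤
      sSup ((fun m => (h n / h m) * ‖evol A m n (P n x)‖) '' Set.Ici n) +
      sSup ((fun p => (k p / k n) * ‖B n p ((1 - P n) x)‖) '' Set.Iic n) := by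
    intro n x
    calc ‖x‖ = ‖P n x + (1 - P n) x‖ := by rw [hPQ]
      _ ≤ ‖P n x‖ + ‖(1 - P n) x‖ := norm_add_le _ _
      _ ≤ _ := add_le_add (hlow1 n x) (hlow2 n x)
  constructor
  · -- IsNormSeq
    intro n
    refine ⟨?_, ?_, ?_⟩
    · intro x y
      have t1 : sSup ((fun m => (h n / h m) * ‖evol A m n (P n (x + y))‖) '' Set.Ici n) ≤
          sSup ((fun m => (h n / h m) * ‖evol A m n (P n x)‖) '' Set.Ici n) +
          sSup ((fun m => (h n / h m) * ‖evol A m n (P n y)‖) '' Set.Ici n) := by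
        refine csSup_le (hne1 n (x + y)) ?_
        rintro _ ⟨m, hm, rfl⟩
        have e1 : (h n / h m) * ‖evol A m n (P n (x + y))‖ ≤
            (h n / h m) * ‖evol A m n (P n x)‖ + (h n / h m) * ‖evol A m n (P n y)‖ := by
          rw [← mul_add]
          refine mul_le_mul_of_nonneg_left ?_ (div_nonneg (hhpos n).le (hhpos m).le)
          rw [map_add, map_add]
          exact norm_add_le _ _
        exact e1.trans (add_le_add (le_csSup (hbdd1 n x) ⟨m, hm, rfl⟩)
          (le_csSup (hbdd1 n y) ⟨m, hm, rfl⟩))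
      have t2 : sSup ((fun p => (k p / k n) * ‖B n p ((1 - P n) (x + y))‖) '' Set.Iic n) ≤
          sSup ((fun p => (k p / k n) * ‖B n p ((1 - P n) x)‖) '' Set.Iic n) +
          sSup ((fun p => (k p / k n) * ‖B n p ((1 - P n) y)‖) '' Set.Iic n) := by
        refine csSup_le (hne2 n (x + y)) ?_
        rintro _ ⟨p, hp, rfl⟩
        have e1 : (k p / k n) * ‖B n p ((1 - P n) (x + y))‖ ≤
            (k p / k n) * ‖B n p ((1 - P n) x)‖ + (k p / k n) * ‖B n p ((1 - P n) y)‖ := by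
          rw [← mul_add]
          refine mul_le_mul_of_nonneg_left ?_ (div_nonneg (hkpos p).le (hkpos n).le)
          rw [map_add, map_add]
          exact norm_add_le _ _
        exact e1.trans (add_le_add (le_csSup (hbdd2 n x) ⟨p, hp, rfl⟩)
          (le_csSup (hbdd2 n y) ⟨p, hp, rfl⟩))
      dsimp only
      linarith
    · intro a x
      have e1 : (fun m => (h n / h m) * ‖evol A m n (P n (a • x))‖) '' Set.Ici n
          = (fun t => |a| * t) ''
            ((fun m => (h n / h m) * ‖evol A m n (P n x)‖) '' Set.Ici n) := by
        rw [Set.image_image]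
        refine Set.image_congr' fun m => ?_
        rw [map_smul, map_smul, norm_smul, Real.norm_eq_abs]
        ring
      have e2 : (fun p => (k p / k n) * ‖B n p ((1 - P n) (a • x))‖) '' Set.Iic n
          = (fun t => |a| * t) ''
            ((fun p => (k p / k n) * ‖B n p ((1 - P n) x)‖) '' Set.Iic n) := by
        rw [Set.image_image]
        refine Set.image_congr' fun p => ?_
        rw [map_smul, map_smul, norm_smul, Real.norm_eq_abs]
        ring
      dsimp only
      rw [e1, e2, csSup_mul_left' (abs_nonneg a) (hne1 n x) (hbdd1 n x),
        csSup_mul_left' (abs_nonneg a) (hne2 n x) (hbdd2 n x), mul_add]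
    · intro x
      constructor
      · intro hx
        have hx' : sSup ((fun m => (h n / h m) * ‖evol A m n (P n x)‖) '' Set.Ici n) +
            sSup ((fun p => (k p / k n) * ‖B n p ((1 - P n) x)‖) '' Set.Iic n) = 0 := hx
        have hxx := hxle n x
        rw [hx'] at hxx
        exact norm_le_zero_iff.mp hxx
      · rintro rfl
        simp only [map_zero, norm_zero, mul_zero]
        rw [Set.Nonempty.image_const ⟨n, Set.self_mem_Ici⟩,
          Set.Nonempty.image_const ⟨n, Set.self_mem_Iic⟩, csSup_singleton, add_zero]
  · refine ⟨g, hg1, hgmono, fun n x => ⟨hxle n x, ?_⟩⟩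
    dsimp only
    calc sSup ((fun m => (h n / h m) * ‖evol A m n (P n x)‖) '' Set.Ici n) +
        sSup ((fun p => (k p / k n) * ‖B n p ((1 - P n) x)‖) '' Set.Iic n)
        ≤ g n * ‖P n x‖ + g n * ‖(1 - P n) x‖ := add_le_add (hup1 n x) (hup2 n x)
      _ = g n * (‖P n x‖ + ‖(1 - P n) x‖) := (mul_add _ _ _).symm


end
end
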